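/- (Corollary 3.3.1 and Theorem 1.1 C) Let p ∈ [1, ∞] and f ∈ L_p(ℝ). The function y(x) = (Gf)(x) is continuously differentiable with locally absolutely continuous first derivative, is bounded on ℝ, and satisfies −y''(x) + q(x)y(x) = f(x) for almost every x ∈ ℝ; moreover y is the unique solution of this equation in the class of bounded continuously differentiable functions with locally absolutely continuous first derivative. -/

import Mathlib

open MeasureTheory Filter Real Set
open scoped ENNReal
open intervalIntegral MeasureTheory Topology

noncomputable section

/-- Condition (1.5): for every `a > 0`, `∫_{x-a}^{x+a} q(t) dt → ∞` as `|x| → ∞`. -/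
def Cond15 (q : ℝ → ℝ) : Prop :=
  ∀ a : ℝ, 0 < a → Tendsto (fun x => ∫ t in (x - a)..(x + a), q t) (cocompact ℝ) atTop

/-- `(u, v)` is a principal fundamental system of solutions (PFSS) of `z'' = q z`.
Local absolute continuity of `u'` together with `u'' = q u` a.e. is encoded via the
fundamental theorem of calculus: `u' b - u' a = ∫_a^b q t * u t dt` for all `a, b`. -/
def IsPFSS (q u v : ℝ → ℝ) : Prop :=
  ContDiff ℝ 1 u ∧ ContDiff ℝ 1 v ∧
  (∀ a b : ℝ, deriv u b - deriv u a = ∫ t in a..b, q t * u t) ∧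
  (∀ a b : ℝ, deriv v b - deriv v a = ∫ t in a..b, q t * v t) ∧
  (∀ x, 0 < u x) ∧ (∀ x, 0 < v x) ∧
  (∀ x, deriv u x < 0) ∧ (∀ x, 0 < deriv v x) ∧
  (∀ x, deriv v x * u x - deriv u x * v x = 1) ∧
  (∀ x, u x = v x * ∫ t in Set.Ioi x, ((v t) ^ 2)⁻¹) ∧
  Tendsto u atTop (nhds 0) ∧ Tendsto (deriv u) atTop (nhds 0) ∧
  Tendsto v atTop atTop ∧ Tendsto (deriv v) atTop atTop ∧
  Tendsto v atBot (nhds 0) ∧ Tendsto (deriv v) atBot (nhds 0) ∧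
  Tendsto u atBot atTop ∧ Tendsto (fun x => |deriv u x|) atBot atTop

/-- The Green function: `G(x,t) = u(x) v(t)` for `x ≥ t`, `G(x,t) = u(t) v(x)` for `x ≤ t`. -/
def GreenFn (u v : ℝ → ℝ) (x t : ℝ) : ℝ := if x ≤ t then u t * v x else u x * v t

/-- The Green operator `(Gf)(x) = ∫_ℝ G(x,t) f(t) dt`. -/
def GreenOp (u v f : ℝ → ℝ) (x : ℝ) : ℝ := ∫ t, GreenFn u v x t * f t
set_option maxHeartbeats 2000000

lemma cont_mul_locInt {F f : ℝ → ℝ} (hF : Continuous F) (hf : LocallyIntegrable f) :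
    LocallyIntegrable fun t => F t * f t :=
  locallyIntegrableOn_univ.mp <|
    (hf.locallyIntegrableOn univ).continuousOn_mul hF.continuousOn isOpen_univ.isLocallyClosed

lemma locInt_mul_cont {F f : ℝ → ℝ} (hF : Continuous F) (hf : LocallyIntegrable f) :
    LocallyIntegrable fun t => f t * F t :=
  locallyIntegrableOn_univ.mp <|
    (hf.locallyIntegrableOn univ).mul_continuousOn hF.continuousOn isOpen_univ.isLocallyClosed

lemma locInt_ii {f : ℝ → ℝ} (hf : LocallyIntegrable f) (a b : ℝ) :
    IntervalIntegrable f volume a b :=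
  intervalIntegrable_iff.mpr <|
    (hf.integrableOn_isCompact isCompact_uIcc).mono_set uIoc_subset_uIcc

lemma tri_fubini {φ ψ : ℝ → ℝ} {a b : ℝ} (hab : a ≤ b)
    (hφ : IntegrableOn φ (Ioc a b)) (hψ : IntegrableOn ψ (Ioc a b)) :
    ∫ s in a..b, ψ s * ∫ t in a..s, φ t = ∫ t in a..b, φ t * ∫ s in t..b, ψ s := by
  set F : ℝ × ℝ → ℝ := fun p => if p.2 ≤ p.1 then ψ p.1 * φ p.2 else 0 with hF
  have hmeas : MeasurableSet {p : ℝ × ℝ | p.2 ≤ p.1} :=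
    measurableSet_le measurable_snd measurable_fst
  have hFind : F = Set.indicator {p : ℝ × ℝ | p.2 ≤ p.1} (fun p => ψ p.1 * φ p.2) := by
    funext p
    simp [hF, Set.indicator_apply, Set.mem_setOf_eq]
  have hFint : Integrable F ((volume.restrict (Ioc a b)).prod (volume.restrict (Ioc a b))) := by
    rw [hFind]
    exact (Integrable.mul_prod hψ hφ).indicator hmeas
  have swap : ∫ s in Ioc a b, ∫ t in Ioc a b, F (s, t) = ∫ t in Ioc a b, ∫ s in Ioc a b, F (s, t) :=
    integral_integral_swap hFint
  have lhs : ∫ s in a..b, ψ s * ∫ t in a..s, φ t = ∫ s in Ioc a b, ∫ t in Ioc a b, F (s, t) := by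
    rw [intervalIntegral.integral_of_le hab]
    refine setIntegral_congr_fun measurableSet_Ioc (fun s hs => ?_)
    have h1 : ∫ t in Ioc a b, F (s, t) = ∫ t in Ioc a b, (Iic s).indicator φ t * ψ s := by
      refine setIntegral_congr_fun measurableSet_Ioc (fun t _ => ?_)
      simp only [hF, Set.indicator_apply, mem_Iic]
      by_cases h : t ≤ s <;> simp [h, mul_comm]
    have h2 : Iic s ∩ Ioc a b = Ioc a s := by
      ext t
      simp only [mem_inter_iff, mem_Ioc, mem_Iic]
      exact ⟨fun ⟨h1, h2⟩ => ⟨h2.1, h1⟩, fun ⟨h1, h2⟩ => ⟨h2, h1, h2.trans hs.2⟩⟩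
    rw [h1, MeasureTheory.integral_mul_const, MeasureTheory.integral_indicator measurableSet_Iic,
      Measure.restrict_restrict measurableSet_Iic, h2,
      intervalIntegral.integral_of_le hs.1.le, mul_comm]
  have rhs : ∫ t in a..b, φ t * ∫ s in t..b, ψ s = ∫ t in Ioc a b, ∫ s in Ioc a b, F (s, t) := by
    rw [intervalIntegral.integral_of_le hab]
    refine setIntegral_congr_fun measurableSet_Ioc (fun t ht => ?_)
    have h1 : ∫ s in Ioc a b, F (s, t) = ∫ s in Ioc a b, (Ici t).indicator ψ s * φ t := by
      refine setIntegral_congr_fun measurableSet_Ioc (fun s _ => ?_)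
      simp only [hF, Set.indicator_apply, mem_Ici]
      by_cases h : t ≤ s <;> simp [h, mul_comm]
    have h2 : Ici t ∩ Ioc a b = Icc t b := by
      ext s
      simp only [mem_inter_iff, mem_Ioc, mem_Ici, mem_Icc]
      exact ⟨fun ⟨h1, h2⟩ => ⟨h1, h2.2⟩, fun ⟨h1, h2⟩ => ⟨h1, lt_of_lt_of_le ht.1 h1, h2⟩⟩
    rw [h1, MeasureTheory.integral_mul_const, MeasureTheory.integral_indicator measurableSet_Ici,
      Measure.restrict_restrict measurableSet_Ici, h2, integral_Icc_eq_integral_Ioc,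
      intervalIntegral.integral_of_le ht.2, mul_comm]
  rw [lhs, rhs, swap]

/-- Integration by parts for two locally absolutely continuous functions given via FTC data. -/
lemma parts_ftc {F G f g : ℝ → ℝ} (hFc : Continuous F) (hGc : Continuous G)
    (hf : LocallyIntegrable f) (hg : LocallyIntegrable g)
    (hFf : ∀ a b : ℝ, F b - F a = ∫ t in a..b, f t)
    (hGg : ∀ a b : ℝ, G b - G a = ∫ t in a..b, g t)
    (a b : ℝ) :
    F b * G b - F a * G a = ∫ t in a..b, (F t * g t + f t * G t) := by
  have key : ∀ a b : ℝ, a ≤ b → F b * G b - F a * G a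
      = ∫ t in a..b, (F t * g t + f t * G t) := by
    intro a b hab
    have hfi : IntervalIntegrable f volume a b := locInt_ii hf a b
    have hgi : IntervalIntegrable g volume a b := locInt_ii hg a b
    have hFg : IntervalIntegrable (fun t => F t * g t) volume a b :=
      locInt_ii (cont_mul_locInt hFc hg) a b
    have hfG : IntervalIntegrable (fun t => f t * G t) volume a b :=
      locInt_ii (locInt_mul_cont hGc hf) a b
    have hPrim : Continuous fun t => ∫ s in a..t, f s :=
      intervalIntegral.continuous_primitive (fun c d => locInt_ii hf c d) a
    have hgP : IntervalIntegrable (fun t => g t * ∫ s in a..t, f s) volume a b :=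
      locInt_ii (locInt_mul_cont hPrim hg) a b
    -- step 1 : expand F inside ∫ F g
    have e1 : ∫ t in a..b, F t * g t
        = F a * (G b - G a) + ∫ t in a..b, g t * ∫ s in a..t, f s := by
      have : ∀ t : ℝ, F t * g t = F a * g t + g t * ∫ s in a..t, f s := by
        intro t
        have h := hFf a t
        have : F t = F a + ∫ s in a..t, f s := by linarith
        rw [this]; ring
      rw [intervalIntegral.integral_congr (fun t _ => this t),
        intervalIntegral.integral_add (hgi.const_mul (F a)) hgP,
        intervalIntegral.integral_const_mul, hGg a b]
    -- step 2 : Fubini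
    have e2 : ∫ t in a..b, g t * ∫ s in a..t, f s
        = G b * (F b - F a) - ∫ t in a..b, f t * G t := by
      have h0 : ∫ t in a..b, g t * ∫ s in a..t, f s
          = ∫ t in a..b, f t * ∫ s in t..b, g s := by
        refine tri_fubini hab ?_ ?_
        · exact intervalIntegrable_iff.mp (hfi) |>.mono_set (by rw [uIoc_of_le hab])
        · exact intervalIntegrable_iff.mp (hgi) |>.mono_set (by rw [uIoc_of_le hab])
      have h1 : ∀ t : ℝ, f t * ∫ s in t..b, g s = G b * f t - f t * G t := by
        intro t
        have h := hGg t b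
        have : (∫ s in t..b, g s) = G b - G t := by linarith
        rw [this]; ring
      rw [h0, intervalIntegral.integral_congr (fun t _ => h1 t),
        intervalIntegral.integral_sub (hfi.const_mul (G b)) hfG,
        intervalIntegral.integral_const_mul, hFf a b]
    rw [intervalIntegral.integral_add hFg hfG, e1, e2]
    ring
  rcases le_total a b with hab | hba
  · exact key a b hab
  · have h := key b a hba
    rw [intervalIntegral.integral_symm b a]
    linarith

lemma eLpNorm_le_two {k : ℝ → ℝ} {r : ℝ≥0∞} (hr : 1 ≤ r)
    (h1 : ∀ t, |k t| ≤ 1)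
    (hint : ∫⁻ t, ‖k t‖₊ ≤ 2) : eLpNorm k r volume ≤ 2 := by
  rcases eq_or_ne r ∞ with hrt | hrt
  · rw [hrt, eLpNorm_exponent_top]
    refine le_trans (eLpNormEssSup_le_of_ae_bound (C := 1) (ae_of_all _ ?_)) ?_
    · intro t; simpa [Real.norm_eq_abs] using h1 t
    · simp
  · have hr0 : r ≠ 0 := by
      intro h; rw [h] at hr; exact (by simp at hr)
    have hr1 : (1:ℝ) ≤ r.toReal := by
      rw [← ENNReal.toReal_one]
      exact ENNReal.toReal_mono hrt hr
    rw [eLpNorm_eq_lintegral_rpow_enorm_toReal hr0 hrt]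
    have hb : ∀ t, (‖k t‖₊ : ℝ≥0∞) ^ r.toReal ≤ (‖k t‖₊ : ℝ≥0∞) := by
      intro t
      have hle1 : (‖k t‖₊ : ℝ≥0∞) ≤ 1 := by
        rw [← ENNReal.coe_one, ENNReal.coe_le_coe, ← NNReal.coe_le_coe]
        simpa [Real.norm_eq_abs] using h1 t
      calc (‖k t‖₊ : ℝ≥0∞) ^ r.toReal ≤ (‖k t‖₊ : ℝ≥0∞) ^ (1:ℝ) :=
            ENNReal.rpow_le_rpow_of_exponent_ge hle1 hr1
        _ = ‖k t‖₊ := ENNReal.rpow_one _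
    have : (∫⁻ t, (‖k t‖₊ : ℝ≥0∞) ^ r.toReal) ≤ 2 :=
      le_trans (lintegral_mono hb) hint
    calc (∫⁻ t, (‖k t‖₊ : ℝ≥0∞) ^ r.toReal) ^ (1 / r.toReal)
        ≤ (2:ℝ≥0∞) ^ (1 / r.toReal) := ENNReal.rpow_le_rpow this (by positivity)
      _ ≤ (2:ℝ≥0∞) ^ (1:ℝ) := ENNReal.rpow_le_rpow_of_exponent_le (by norm_num)
          (by rw [div_le_one (by linarith)]; linarith)
      _ = 2 := ENNReal.rpow_one _

/-- Corollary 3.3.1 / Theorem 1.1 C): for `p ∈ [1, ∞]` and `f ∈ L_p(ℝ)`, `y = Gf` is `C¹`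
with locally absolutely continuous derivative (encoded via FTC), bounded, solves
`-y'' + q y = f` a.e., and is the unique such solution in this class. -/
theorem corollary_3_3_1 (q u v : ℝ → ℝ) (hq_loc : LocallyIntegrable q) (hq : ∀ x, 1 ≤ q x)
    (huv : IsPFSS q u v) (p : ℝ≥0∞) (hp : 1 ≤ p) (f : ℝ → ℝ) (hf : MemLp f p) :
    ContDiff ℝ 1 (GreenOp u v f) ∧
    (∃ M : ℝ, ∀ x, |GreenOp u v f x| ≤ M) ∧
    (∀ a b : ℝ, deriv (GreenOp u v f) b - deriv (GreenOp u v f) a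
        = ∫ t in a..b, (q t * GreenOp u v f t - f t)) ∧
    (∀ z : ℝ → ℝ, ContDiff ℝ 1 z → (∃ M : ℝ, ∀ x, |z x| ≤ M) →
      (∀ a b : ℝ, deriv z b - deriv z a = ∫ t in a..b, (q t * z t - f t)) →
      z = GreenOp u v f) := by
  obtain ⟨hu1, hv1, huq, hvq, hupos, hvpos, hu'neg, hv'pos, hwr, hrep,
    huT, hu'T, hvT, hv'T, hvB, hv'B, huB, hu'B⟩ := huv
  have hudiff : Differentiable ℝ u := hu1.differentiable one_ne_zero
  have hvdiff : Differentiable ℝ v := hv1.differentiable one_ne_zero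
  have hu : Continuous u := hudiff.continuous
  have hv : Continuous v := hvdiff.continuous
  have hu' : Continuous (deriv u) := (contDiff_one_iff_deriv.mp hu1).2
  have hv' : Continuous (deriv v) := (contDiff_one_iff_deriv.mp hv1).2
  have huanti : StrictAnti u := strictAnti_of_deriv_neg hu'neg
  have hvmono : StrictMono v := strictMono_of_deriv_pos hv'pos
  have hfloc : LocallyIntegrable f := hf.locallyIntegrable hp
  have hqv_loc : LocallyIntegrable (fun t => q t * v t) := locInt_mul_cont hv hq_loc
  have hqu_loc : LocallyIntegrable (fun t => q t * u t) := locInt_mul_cont hu hq_loc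
  have hFTCu : ∀ a b : ℝ, u b - u a = ∫ t in a..b, deriv u t := fun a b =>
    (intervalIntegral.integral_deriv_eq_sub (fun x _ => hudiff x) (locInt_ii
      (hu'.locallyIntegrable) a b)).symm
  have hFTCv : ∀ a b : ℝ, v b - v a = ∫ t in a..b, deriv v t := fun a b =>
    (intervalIntegral.integral_deriv_eq_sub (fun x _ => hvdiff x) (locInt_ii
      (hv'.locallyIntegrable) a b)).symm
  -- v ≤ v'
  have hvv' : ∀ x, v x ≤ deriv v x := by
    have hE : ∀ a b : ℝ, a ≤ b →
        (deriv v a)^2 - (v a)^2 ≤ (deriv v b)^2 - (v b)^2 := by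
      intro a b hab
      have h1 := parts_ftc hv' hv' hqv_loc hqv_loc hvq hvq a b
      have h2 := parts_ftc hv hv (hv'.locallyIntegrable) (hv'.locallyIntegrable) hFTCv hFTCv a b
      have hint1 : IntervalIntegrable
          (fun t => deriv v t * (q t * v t) + q t * v t * deriv v t) volume a b :=
        locInt_ii (LocallyIntegrable.add (cont_mul_locInt hv' hqv_loc)
          (locInt_mul_cont hv' hqv_loc)) a b
      have hint2 : IntervalIntegrable
          (fun t => v t * deriv v t + deriv v t * v t) volume a b :=
        locInt_ii (LocallyIntegrable.add (cont_mul_locInt hv (hv'.locallyIntegrable))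
          (locInt_mul_cont hv (hv'.locallyIntegrable))) a b
      have key : ((deriv v b)^2 - (v b)^2) - ((deriv v a)^2 - (v a)^2)
          = ∫ t in a..b, ((deriv v t * (q t * v t) + q t * v t * deriv v t)
              - (v t * deriv v t + deriv v t * v t)) := by
        rw [intervalIntegral.integral_sub hint1 hint2, ← h1, ← h2]; ring
      have hnn : 0 ≤ ∫ t in a..b, ((deriv v t * (q t * v t) + q t * v t * deriv v t)
          - (v t * deriv v t + deriv v t * v t)) := by
        apply intervalIntegral.integral_nonneg hab
        intro t _
        have h3 := hv'pos t; have h4 := hvpos t; have h5 := hq t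
        nlinarith [mul_nonneg (mul_pos h3 h4).le (sub_nonneg.mpr h5)]
      linarith
    have hlim : Tendsto (fun x => (deriv v x)^2 - (v x)^2) atBot (nhds 0) := by
      have := (hv'B.pow 2).sub (hvB.pow 2)
      simpa using this
    intro x
    have hnn : 0 ≤ (deriv v x)^2 - (v x)^2 := by
      refine le_of_tendsto hlim ?_
      filter_upwards [eventually_le_atBot x] with c hc
      exact hE c x hc
    have := hvpos x; have := hv'pos x
    nlinarith
  -- u ≤ -u'
  have huu' : ∀ x, u x ≤ -deriv u x := by
    have hD : ∀ a b : ℝ, a ≤ b →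
        (deriv u b)^2 - (u b)^2 ≤ (deriv u a)^2 - (u a)^2 := by
      intro a b hab
      have h1 := parts_ftc hu' hu' hqu_loc hqu_loc huq huq a b
      have h2 := parts_ftc hu hu (hu'.locallyIntegrable) (hu'.locallyIntegrable) hFTCu hFTCu a b
      have hint1 : IntervalIntegrable
          (fun t => deriv u t * (q t * u t) + q t * u t * deriv u t) volume a b :=
        locInt_ii (LocallyIntegrable.add (cont_mul_locInt hu' hqu_loc)
          (locInt_mul_cont hu' hqu_loc)) a b
      have hint2 : IntervalIntegrable
          (fun t => u t * deriv u t + deriv u t * u t) volume a b :=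
        locInt_ii (LocallyIntegrable.add (cont_mul_locInt hu (hu'.locallyIntegrable))
          (locInt_mul_cont hu (hu'.locallyIntegrable))) a b
      have key : ((deriv u b)^2 - (u b)^2) - ((deriv u a)^2 - (u a)^2)
          = ∫ t in a..b, ((deriv u t * (q t * u t) + q t * u t * deriv u t)
              - (u t * deriv u t + deriv u t * u t)) := by
        rw [intervalIntegral.integral_sub hint1 hint2, ← h1, ← h2]; ring
      have hnn : (∫ t in a..b, ((deriv u t * (q t * u t) + q t * u t * deriv u t)
          - (u t * deriv u t + deriv u t * u t))) ≤ 0 := by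
        rw [← neg_nonneg, ← intervalIntegral.integral_neg]
        apply intervalIntegral.integral_nonneg hab
        intro t _
        have h3 := hu'neg t; have h4 := hupos t; have h5 := hq t
        nlinarith [mul_nonneg (mul_pos (neg_pos.mpr h3) h4).le (sub_nonneg.mpr h5)]
      linarith
    have hlim : Tendsto (fun x => (deriv u x)^2 - (u x)^2) atTop (nhds 0) := by
      have := (hu'T.pow 2).sub (huT.pow 2)
      simpa using this
    intro x
    have hnn : 0 ≤ (deriv u x)^2 - (u x)^2 := by
      refine le_of_tendsto hlim ?_
      filter_upwards [eventually_ge_atTop x] with c hc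
      exact hD x c hc
    have := hupos x; have := hu'neg x
    nlinarith
  -- Wronskian bounds
  have hww : ∀ x, u x * deriv v x ≤ 1 := by
    intro x; have := hwr x; have := hu'neg x; have := hvpos x; nlinarith
  have hw2 : ∀ x, -deriv u x * v x ≤ 1 := by
    intro x; have := hwr x; have := hv'pos x; have := hupos x; nlinarith
  have huv1 : ∀ x, u x * v x ≤ 1 := fun x =>
    le_trans (mul_le_mul_of_nonneg_left (hvv' x) (hupos x).le) (hww x)
  -- integrability of v on Iic x
  have hvbnd : ∀ a x : ℝ, a ≤ x → (∫ t in a..x, ‖v t‖) ≤ deriv v x := by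
    intro a x hax
    have e1 : (∫ t in a..x, ‖v t‖) = ∫ t in a..x, v t := by
      refine intervalIntegral.integral_congr fun t _ => ?_
      exact Real.norm_of_nonneg (hvpos t).le
    have e2 : (∫ t in a..x, v t) ≤ ∫ t in a..x, q t * v t := by
      refine intervalIntegral.integral_mono_on hax (locInt_ii hv.locallyIntegrable a x)
        (locInt_ii hqv_loc a x) fun t _ => ?_
      nlinarith [hvpos t, hq t]
    have e3 : (∫ t in a..x, q t * v t) = deriv v x - deriv v a := (hvq a x).symm
    have := hv'pos a
    linarith [e1, e2]
  have hvIic : ∀ x : ℝ, IntegrableOn v (Iic x) := by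
    intro x
    refine integrableOn_Iic_of_intervalIntegral_norm_bounded (deriv v x) x
      (fun a => (hv.locallyIntegrable.integrableOn_isCompact isCompact_Icc).mono_set
        Ioc_subset_Icc_self) tendsto_id ?_
    filter_upwards [eventually_le_atBot x] with a ha
    exact hvbnd a x ha
  have hvIic_le : ∀ x : ℝ, (∫ t in Iic x, v t) ≤ deriv v x := by
    intro x
    refine le_of_tendsto (intervalIntegral_tendsto_integral_Iic x (hvIic x) tendsto_id) ?_
    filter_upwards [eventually_le_atBot x] with a ha
    calc (∫ t in a..x, v t) = ∫ t in a..x, ‖v t‖ := by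
          refine (intervalIntegral.integral_congr fun t _ => ?_).symm
          exact Real.norm_of_nonneg (hvpos t).le
      _ ≤ deriv v x := hvbnd a x ha
  -- integrability of u on Ioi x
  have hubnd : ∀ x b : ℝ, x ≤ b → (∫ t in x..b, ‖u t‖) ≤ -deriv u x := by
    intro x b hxb
    have e1 : (∫ t in x..b, ‖u t‖) = ∫ t in x..b, u t := by
      refine intervalIntegral.integral_congr fun t _ => ?_
      exact Real.norm_of_nonneg (hupos t).le
    have e2 : (∫ t in x..b, u t) ≤ ∫ t in x..b, q t * u t := by
      refine intervalIntegral.integral_mono_on hxb (locInt_ii hu.locallyIntegrable x b)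
        (locInt_ii hqu_loc x b) fun t _ => ?_
      nlinarith [hupos t, hq t]
    have e3 : (∫ t in x..b, q t * u t) = deriv u b - deriv u x := (huq x b).symm
    have := hu'neg b
    linarith [e1, e2]
  have huIoi : ∀ x : ℝ, IntegrableOn u (Ioi x) := by
    intro x
    refine integrableOn_Ioi_of_intervalIntegral_norm_bounded (-deriv u x) x
      (fun b => (hu.locallyIntegrable.integrableOn_isCompact isCompact_Icc).mono_set
        Ioc_subset_Icc_self) tendsto_id ?_
    filter_upwards [eventually_ge_atTop x] with b hb
    exact hubnd x b hb
  have huIoi_le : ∀ x : ℝ, (∫ t in Ioi x, u t) ≤ -deriv u x := by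
    intro x
    refine le_of_tendsto (intervalIntegral_tendsto_integral_Ioi x (huIoi x) tendsto_id) ?_
    filter_upwards [eventually_ge_atTop x] with b hb
    calc (∫ t in x..b, u t) = ∫ t in x..b, ‖u t‖ := by
          refine (intervalIntegral.integral_congr fun t _ => ?_).symm
          exact Real.norm_of_nonneg (hupos t).le
      _ ≤ -deriv u x := hubnd x b hb
  -- kernel facts
  have hkcont : ∀ x, Continuous (fun t => GreenFn u v x t) := by
    intro x
    simp only [GreenFn]
    exact Continuous.if_le (hu.mul continuous_const) (continuous_const.mul hv)
      continuous_const continuous_id fun t ht => by rw [ht]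
  have hknn : ∀ x t, 0 ≤ GreenFn u v x t := by
    intro x t
    simp only [GreenFn]
    split
    · exact mul_nonneg (hupos t).le (hvpos x).le
    · exact mul_nonneg (hupos x).le (hvpos t).le
  have hkle1 : ∀ x t, GreenFn u v x t ≤ 1 := by
    intro x t
    simp only [GreenFn]
    split
    · rename_i h
      calc u t * v x ≤ u x * v x :=
            mul_le_mul_of_nonneg_right (huanti.antitone h) (hvpos x).le
        _ ≤ 1 := huv1 x
    · rename_i h
      push_neg at h
      calc u x * v t ≤ u x * v x :=
            mul_le_mul_of_nonneg_left (hvmono.monotone h.le) (hupos x).le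
        _ ≤ 1 := huv1 x
  have hkIicEq : ∀ x t : ℝ, t ≤ x → u x * v t = GreenFn u v x t := by
    intro x t ht
    simp only [GreenFn]
    split
    · rename_i h'
      have : t = x := le_antisymm ht h'
      subst this; ring
    · rfl
  have hkIoiEq : ∀ x t : ℝ, x < t → v x * u t = GreenFn u v x t := by
    intro x t ht
    simp only [GreenFn]
    split
    · ring
    · rename_i h'
      exact absurd (le_of_lt ht) h'
  have hkEqIic : ∀ x : ℝ, EqOn (fun t => u x * v t) (fun t => GreenFn u v x t) (Iic x) :=
    fun x t ht => hkIicEq x t ht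
  have hkEqIoi : ∀ x : ℝ, EqOn (fun t => v x * u t) (fun t => GreenFn u v x t) (Ioi x) :=
    fun x t ht => hkIoiEq x t ht
  have hkIic : ∀ x, IntegrableOn (fun t => GreenFn u v x t) (Iic x) := fun x =>
    IntegrableOn.congr_fun ((hvIic x).const_mul (u x)) (hkEqIic x) measurableSet_Iic
  have hkIoi : ∀ x, IntegrableOn (fun t => GreenFn u v x t) (Ioi x) := fun x =>
    IntegrableOn.congr_fun ((huIoi x).const_mul (v x)) (hkEqIoi x) measurableSet_Ioi
  have hkint : ∀ x, Integrable (fun t => GreenFn u v x t) := by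
    intro x
    rw [← integrableOn_univ, ← Set.Iic_union_Ioi (a := x)]
    exact (hkIic x).union (hkIoi x)
  have hkval : ∀ x, (∫ t, GreenFn u v x t) ≤ 2 := by
    intro x
    rw [← integral_Iic_add_Ioi (hkIic x) (hkIoi x)]
    have e1 : (∫ t in Iic x, GreenFn u v x t) ≤ 1 := by
      rw [← setIntegral_congr_fun measurableSet_Iic (hkEqIic x),
        MeasureTheory.integral_const_mul]
      calc u x * ∫ t in Iic x, v t ≤ u x * deriv v x :=
            mul_le_mul_of_nonneg_left (hvIic_le x) (hupos x).le
        _ ≤ 1 := hww x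
    have e2 : (∫ t in Ioi x, GreenFn u v x t) ≤ 1 := by
      rw [← setIntegral_congr_fun measurableSet_Ioi (hkEqIoi x),
        MeasureTheory.integral_const_mul]
      calc v x * ∫ t in Ioi x, u t ≤ v x * -deriv u x :=
            mul_le_mul_of_nonneg_left (huIoi_le x) (hvpos x).le
        _ ≤ 1 := by rw [mul_comm]; exact hw2 x
    linarith
  have hkl : ∀ x, (∫⁻ t, (‖GreenFn u v x t‖₊ : ℝ≥0∞)) ≤ 2 := by
    intro x
    have h := ofReal_integral_eq_lintegral_ofReal (hkint x) (ae_of_all _ fun t => hknn x t)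
    have h2 : (∫⁻ t, (‖GreenFn u v x t‖₊ : ℝ≥0∞)) = ∫⁻ t, ENNReal.ofReal (GreenFn u v x t) := by
      refine lintegral_congr fun t => ?_
      exact Real.enorm_eq_ofReal (hknn x t)
    rw [h2, ← h]
    calc ENNReal.ofReal (∫ t, GreenFn u v x t) ≤ ENNReal.ofReal 2 :=
          ENNReal.ofReal_le_ofReal (hkval x)
      _ = 2 := by norm_num
  -- Hölder
  have hple : p⁻¹ ≤ 1 := ENNReal.inv_le_one.mpr hp
  set p' : ℝ≥0∞ := (1 - p⁻¹)⁻¹ with hp'def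
  have hp'1 : 1 ≤ p' := ENNReal.one_le_inv.mpr tsub_le_self
  have hcon : (1 : ℝ≥0∞) / 1 = 1 / p' + 1 / p := by
    rw [one_div, one_div, one_div, inv_one, hp'def, inv_inv,
      tsub_add_cancel_of_le hple]
  have hkeL : ∀ x, eLpNorm (fun t => GreenFn u v x t) p' volume ≤ 2 := by
    intro x
    refine eLpNorm_le_two hp'1 (fun t => ?_) (hkl x)
    rw [abs_of_nonneg (hknn x t)]
    exact hkle1 x t
  have hkfeL : ∀ x, eLpNorm (fun t => GreenFn u v x t * f t) 1 volume
      ≤ 2 * eLpNorm f p volume := by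
    intro x
    haveI : ENNReal.HolderTriple p' p 1 := ⟨by simpa [one_div] using hcon.symm⟩
    have hH := eLpNorm_smul_le_mul_eLpNorm (μ := volume) (p := p') (q := p) (r := 1)
      hf.1 (hkcont x).aestronglyMeasurable
    have heq : (fun t => GreenFn u v x t) • f = fun t => GreenFn u v x t * f t := rfl
    rw [heq] at hH
    exact hH.trans (mul_le_mul_left (hkeL x) _)
  have hkfint : ∀ x, Integrable (fun t => GreenFn u v x t * f t) := by
    intro x
    rw [← memLp_one_iff_integrable]
    refine ⟨(hkcont x).aestronglyMeasurable.mul hf.1, lt_of_le_of_lt (hkfeL x) ?_⟩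
    exact ENNReal.mul_lt_top (by norm_num) hf.2
  -- part 2 : boundedness
  have hbound : ∀ x, |GreenOp u v f x| ≤ (2 * eLpNorm f p volume).toReal := by
    intro x
    have h1 : |GreenOp u v f x| ≤ ∫ t, ‖GreenFn u v x t * f t‖ := by
      rw [GreenOp, ← Real.norm_eq_abs]
      exact norm_integral_le_integral_norm _
    have h2 : (∫ t, ‖GreenFn u v x t * f t‖)
        = (∫⁻ t, ‖GreenFn u v x t * f t‖ₑ).toReal :=
      integral_norm_eq_lintegral_enorm (hkfint x).1
    have h3 : (∫⁻ t, ‖GreenFn u v x t * f t‖ₑ) ≤ 2 * eLpNorm f p volume := by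
      rw [← eLpNorm_one_eq_lintegral_enorm]
      exact hkfeL x
    refine h1.trans ?_
    rw [h2]
    exact ENNReal.toReal_mono (ENNReal.mul_ne_top (by norm_num) hf.2.ne) h3
  -- A and B
  set A : ℝ → ℝ := fun x => ∫ t in Iic x, v t * f t with hAdef
  set B : ℝ → ℝ := fun x => ∫ t in Ioi x, u t * f t with hBdef
  have hkfEqIic : ∀ x : ℝ, EqOn (fun t => u x * (v t * f t))
      (fun t => GreenFn u v x t * f t) (Iic x) := by
    intro x t ht
    simp only
    rw [← hkIicEq x t ht]
    ring
  have hkfEqIoi : ∀ x : ℝ, EqOn (fun t => v x * (u t * f t))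
      (fun t => GreenFn u v x t * f t) (Ioi x) := by
    intro x t ht
    simp only
    rw [← hkIoiEq x t ht]
    ring
  have hvfIic : ∀ x, IntegrableOn (fun t => v t * f t) (Iic x) := by
    intro x
    have h : IntegrableOn (fun t => u x * (v t * f t)) (Iic x) :=
      IntegrableOn.congr_fun ((hkfint x).integrableOn) (fun t ht => (hkfEqIic x ht).symm)
        measurableSet_Iic
    have h2 := h.const_mul (u x)⁻¹
    refine IntegrableOn.congr_fun h2 (fun t _ => ?_) measurableSet_Iic
    have := (hupos x).ne'
    field_simp
  have hufIoi : ∀ x, IntegrableOn (fun t => u t * f t) (Ioi x) := by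
    intro x
    have h : IntegrableOn (fun t => v x * (u t * f t)) (Ioi x) :=
      IntegrableOn.congr_fun ((hkfint x).integrableOn) (fun t ht => (hkfEqIoi x ht).symm)
        measurableSet_Ioi
    have h2 := h.const_mul (v x)⁻¹
    refine IntegrableOn.congr_fun h2 (fun t _ => ?_) measurableSet_Ioi
    have := (hvpos x).ne'
    field_simp
  have hsplit : ∀ x, GreenOp u v f x = u x * A x + v x * B x := by
    intro x
    rw [GreenOp, ← integral_Iic_add_Ioi ((hkfint x).integrableOn) ((hkfint x).integrableOn)]
    congr 1
    · rw [← setIntegral_congr_fun measurableSet_Iic (hkfEqIic x),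
        MeasureTheory.integral_const_mul]
    · rw [← setIntegral_congr_fun measurableSet_Ioi (hkfEqIoi x),
        MeasureTheory.integral_const_mul]
  have hvf_loc : LocallyIntegrable (fun t => v t * f t) := by
    rw [locallyIntegrable_iff]
    intro K hK
    obtain ⟨C, hC⟩ := hK.bddAbove
    exact (hvfIic C).mono_set fun y hy => hC hy
  have huf_loc : LocallyIntegrable (fun t => u t * f t) := by
    rw [locallyIntegrable_iff]
    intro K hK
    obtain ⟨C, hC⟩ := hK.bddBelow
    exact (hufIoi (C - 1)).mono_set fun y hy => lt_of_lt_of_le (by linarith) (hC hy)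
  have hA : ∀ a b : ℝ, A b - A a = ∫ t in a..b, v t * f t := fun a b =>
    integral_Iic_sub_Iic (hvfIic a) (hvfIic b)
  have hBkey : ∀ a b : ℝ, a ≤ b → B a - B b = ∫ t in a..b, u t * f t := by
    intro a b hab
    have hunion : Ioc a b ∪ Ioi b = Ioi a := Ioc_union_Ioi_eq_Ioi hab
    have hdisj : Disjoint (Ioc a b) (Ioi b) := Ioc_disjoint_Ioi le_rfl
    have : B a = (∫ t in Ioc a b, u t * f t) + B b := by
      rw [hBdef]
      simp only
      rw [← hunion, setIntegral_union hdisj measurableSet_Ioi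
        ((hufIoi a).mono_set Ioc_subset_Ioi_self) ((hufIoi b))]
    rw [this, intervalIntegral.integral_of_le hab]
    ring
  have hB : ∀ a b : ℝ, B b - B a = ∫ t in a..b, -(u t * f t) := by
    intro a b
    rcases le_total a b with hab | hba
    · rw [intervalIntegral.integral_neg, ← hBkey a b hab]
      ring
    · rw [intervalIntegral.integral_symm, intervalIntegral.integral_neg, ← hBkey b a hba]
      ring
  have hAcont : Continuous A := by
    have : ∀ x : ℝ, A x = A 0 + ∫ t in (0:ℝ)..x, v t * f t := by
      intro x
      have := hA 0 x
      linarith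
    rw [funext this]
    exact continuous_const.add
      (intervalIntegral.continuous_primitive (fun a b => locInt_ii hvf_loc a b) 0)
  have hBcont : Continuous B := by
    have : ∀ x : ℝ, B x = B 0 + ∫ t in (0:ℝ)..x, -(u t * f t) := by
      intro x
      have := hB 0 x
      linarith
    rw [funext this]
    exact continuous_const.add
      (intervalIntegral.continuous_primitive (fun a b => locInt_ii huf_loc.neg a b) 0)
  have hfn_loc : LocallyIntegrable (fun t => ‖f t‖) :=
    locallyIntegrableOn_univ.mp ((hfloc.locallyIntegrableOn univ).norm)
  -- the derivative of Gf
  have hderiv : ∀ x, HasDerivAt (GreenOp u v f)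
      (deriv u x * A x + deriv v x * B x) x := by
    intro x
    have hmain : HasDerivAt (fun w => u w * A x + v w * B x)
        (deriv u x * A x + deriv v x * B x) x :=
      (((hudiff x).hasDerivAt).mul_const (A x)).add (((hvdiff x).hasDerivAt).mul_const (B x))
    set R : ℝ → ℝ := fun w => u w * (A w - A x) + v w * (B w - B x) with hRdef
    have hRrep : ∀ w, R w = ∫ t in x..w, (u w * v t - v w * u t) * f t := by
      intro w
      have h1 : IntervalIntegrable (fun t => v t * f t) volume x w := locInt_ii hvf_loc x w
      have h2 : IntervalIntegrable (fun t => u t * f t) volume x w := locInt_ii huf_loc x w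
      have e : R w = u w * (∫ t in x..w, v t * f t) - v w * ∫ t in x..w, u t * f t := by
        rw [hRdef]
        simp only
        rw [hA x w, hB x w, intervalIntegral.integral_neg]
        ring
      rw [e, ← intervalIntegral.integral_const_mul, ← intervalIntegral.integral_const_mul,
        ← intervalIntegral.integral_sub (h1.const_mul _) (h2.const_mul _)]
      refine intervalIntegral.integral_congr fun t _ => ?_
      ring
    have hRx : R x = 0 := by simp [hRdef]
    have hR0 : HasDerivAt R 0 x := by
      rw [hasDerivAt_iff_isLittleO, Asymptotics.isLittleO_iff]
      intro c hc
      obtain ⟨Cu, hCu⟩ := (isCompact_Icc (a := x - 1)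
        (b := x + 1)).exists_bound_of_continuousOn hu.continuousOn
      obtain ⟨Cv, hCv⟩ := (isCompact_Icc (a := x - 1)
        (b := x + 1)).exists_bound_of_continuousOn hv.continuousOn
      obtain ⟨Cu', hCu'⟩ := (isCompact_Icc (a := x - 1)
        (b := x + 1)).exists_bound_of_continuousOn hu'.continuousOn
      obtain ⟨Cv', hCv'⟩ := (isCompact_Icc (a := x - 1)
        (b := x + 1)).exists_bound_of_continuousOn hv'.continuousOn
      have hxI : x ∈ Icc (x - 1) (x + 1) := by constructor <;> linarith
      have hCu0 : 0 ≤ Cu := le_trans (norm_nonneg _) (hCu x hxI)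
      have hCv0 : 0 ≤ Cv := le_trans (norm_nonneg _) (hCv x hxI)
      have hCu'0 : 0 ≤ Cu' := le_trans (norm_nonneg _) (hCu' x hxI)
      have hCv'0 : 0 ≤ Cv' := le_trans (norm_nonneg _) (hCv' x hxI)
      set K : ℝ := Cu' * Cv + Cv' * Cu + 1 with hKdef
      have hK0 : 0 < K := by positivity
      have hPcont : Continuous fun w => ∫ t in x..w, ‖f t‖ :=
        intervalIntegral.continuous_primitive (fun a b => locInt_ii hfn_loc a b) x
      have habs : Tendsto (fun w => |∫ t in x..w, ‖f t‖|) (𝓝 x) (𝓝 0) := by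
        have h := (hPcont.abs).tendsto x
        simpa using h
      have hev1 : ∀ᶠ w in 𝓝 x, |∫ t in x..w, ‖f t‖| < c / K :=
        habs.eventually_lt_const (by positivity)
      have hev2 : ∀ᶠ w in 𝓝 x, w ∈ Icc (x - 1) (x + 1) :=
        Icc_mem_nhds (by linarith) (by linarith)
      filter_upwards [hev1, hev2] with w hPw hwI
      have hptw : ∀ t ∈ Set.uIcc x w, ‖(u w * v t - v w * u t) * f t‖
          ≤ (K * |w - x|) * ‖f t‖ := by
        intro t ht
        have htI : t ∈ Icc (x - 1) (x + 1) := by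
          rcases Set.mem_uIcc.mp ht with ⟨h1, h2⟩ | ⟨h1, h2⟩ <;>
            exact ⟨by linarith [hwI.1], by linarith [hwI.2]⟩
        have hwt : |w - t| ≤ |w - x| := by
          rcases Set.mem_uIcc.mp ht with ⟨h1, h2⟩ | ⟨h1, h2⟩
          · rw [abs_of_nonneg (by linarith), abs_of_nonneg (by linarith)]; linarith
          · rw [abs_of_nonpos (by linarith), abs_of_nonpos (by linarith)]; linarith
        have hsub : ∀ s, s ∈ Set.uIoc t w → s ∈ Icc (x - 1) (x + 1) := by
          intro s hs
          rcases Set.mem_uIoc.mp hs with ⟨h1, h2⟩ | ⟨h1, h2⟩ <;>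
            exact ⟨by linarith [htI.1, hwI.1], by linarith [htI.2, hwI.2]⟩
        have hLu : |u w - u t| ≤ Cu' * |w - t| := by
          rw [hFTCu t w, ← Real.norm_eq_abs]
          exact intervalIntegral.norm_integral_le_of_norm_le_const
            fun s hs => hCu' s (hsub s hs)
        have hLv : |v w - v t| ≤ Cv' * |w - t| := by
          rw [hFTCv t w, ← Real.norm_eq_abs]
          exact intervalIntegral.norm_integral_le_of_norm_le_const
            fun s hs => hCv' s (hsub s hs)
        have hvt : |v t| ≤ Cv := by simpa [Real.norm_eq_abs] using hCv t htI
        have hut : |u t| ≤ Cu := by simpa [Real.norm_eq_abs] using hCu t htI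
        have hcoef : |u w * v t - v w * u t| ≤ K * |w - x| := by
          have e : u w * v t - v w * u t = (u w - u t) * v t - (v w - v t) * u t := by
            ring
          calc |u w * v t - v w * u t|
              ≤ |(u w - u t) * v t| + |(v w - v t) * u t| := by
                rw [e]; exact abs_sub _ _
            _ = |u w - u t| * |v t| + |v w - v t| * |u t| := by rw [abs_mul, abs_mul]
            _ ≤ (Cu' * |w - t|) * Cv + (Cv' * |w - t|) * Cu :=
                add_le_add
                  (mul_le_mul hLu hvt (abs_nonneg _)
                    (mul_nonneg hCu'0 (abs_nonneg _)))
                  (mul_le_mul hLv hut (abs_nonneg _)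
                    (mul_nonneg hCv'0 (abs_nonneg _)))
            _ ≤ (Cu' * |w - x|) * Cv + (Cv' * |w - x|) * Cu :=
                add_le_add
                  (mul_le_mul_of_nonneg_right
                    (mul_le_mul_of_nonneg_left hwt hCu'0) hCv0)
                  (mul_le_mul_of_nonneg_right
                    (mul_le_mul_of_nonneg_left hwt hCv'0) hCu0)
            _ ≤ K * |w - x| := by
                rw [hKdef]; nlinarith [abs_nonneg (w - x)]
        calc ‖(u w * v t - v w * u t) * f t‖
            = |u w * v t - v w * u t| * ‖f t‖ := by
              rw [norm_mul, Real.norm_eq_abs]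
          _ ≤ (K * |w - x|) * ‖f t‖ :=
              mul_le_mul_of_nonneg_right hcoef (norm_nonneg _)
      have hgi : IntervalIntegrable (fun t => (u w * v t - v w * u t) * f t) volume x w :=
        locInt_ii (cont_mul_locInt
          (((continuous_const.mul hv)).sub ((continuous_const.mul hu))) hfloc) x w
      have hni : IntervalIntegrable (fun t => ‖(u w * v t - v w * u t) * f t‖) volume x w :=
        hgi.norm
      have hKfi : IntervalIntegrable (fun t => (K * |w - x|) * ‖f t‖) volume x w :=
        (locInt_ii hfn_loc x w).const_mul _
      have hRbnd : ‖R w‖ ≤ (K * |w - x|) * |∫ t in x..w, ‖f t‖| := by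
        rcases le_total x w with hxw | hwx
        · have h1 : ‖R w‖ ≤ ∫ t in x..w, ‖(u w * v t - v w * u t) * f t‖ := by
            rw [hRrep w]
            exact intervalIntegral.norm_integral_le_integral_norm hxw
          have h2 : (∫ t in x..w, ‖(u w * v t - v w * u t) * f t‖)
              ≤ ∫ t in x..w, (K * |w - x|) * ‖f t‖ := by
            refine intervalIntegral.integral_mono_on hxw hni hKfi fun t ht => ?_
            exact hptw t (by rwa [Set.uIcc_of_le hxw])
          have h3 : (∫ t in x..w, (K * |w - x|) * ‖f t‖)
              = (K * |w - x|) * ∫ t in x..w, ‖f t‖ :=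
            intervalIntegral.integral_const_mul _ _
          refine (h1.trans (h2.trans_eq h3)).trans ?_
          exact mul_le_mul_of_nonneg_left (le_abs_self _) (by positivity)
        · have hsym : R w = -∫ t in w..x, (u w * v t - v w * u t) * f t := by
            rw [hRrep w, intervalIntegral.integral_symm]
          have h1 : ‖R w‖ ≤ ∫ t in w..x, ‖(u w * v t - v w * u t) * f t‖ := by
            rw [hsym, norm_neg]
            exact intervalIntegral.norm_integral_le_integral_norm hwx
          have h2 : (∫ t in w..x, ‖(u w * v t - v w * u t) * f t‖)
              ≤ ∫ t in w..x, (K * |w - x|) * ‖f t‖ := by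
            refine intervalIntegral.integral_mono_on hwx hni.symm hKfi.symm fun t ht => ?_
            exact hptw t (by rwa [Set.uIcc_of_ge hwx])
          have h3 : (∫ t in w..x, (K * |w - x|) * ‖f t‖)
              = (K * |w - x|) * ∫ t in w..x, ‖f t‖ :=
            intervalIntegral.integral_const_mul _ _
          have h4 : (∫ t in w..x, ‖f t‖) ≤ |∫ t in x..w, ‖f t‖| := by
            rw [intervalIntegral.integral_symm]
            exact neg_le_abs _
          refine (h1.trans (h2.trans_eq h3)).trans ?_
          exact mul_le_mul_of_nonneg_left h4 (by positivity)
      have hfinal : ‖R w‖ ≤ c * ‖w - x‖ := by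
        refine hRbnd.trans ?_
        rw [Real.norm_eq_abs]
        calc (K * |w - x|) * |∫ t in x..w, ‖f t‖| ≤ (K * |w - x|) * (c / K) :=
              mul_le_mul_of_nonneg_left hPw.le (by positivity)
          _ = c * |w - x| := by field_simp
      simpa [hRx] using hfinal
    have hEq : GreenOp u v f = fun w => (u w * A x + v w * B x) + R w := by
      funext w
      rw [hsplit w, hRdef]
      ring
    rw [hEq]
    have hsum := hmain.add hR0
    rw [add_zero] at hsum
    exact hsum
  have hyderiv : deriv (GreenOp u v f) = fun x => deriv u x * A x + deriv v x * B x :=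
    funext fun x => (hderiv x).deriv
  have hydiff : Differentiable ℝ (GreenOp u v f) := fun x => (hderiv x).differentiableAt
  have hycont : Continuous (GreenOp u v f) := hydiff.continuous
  have hyC1 : ContDiff ℝ 1 (GreenOp u v f) := by
    rw [contDiff_one_iff_deriv]
    exact ⟨hydiff, by rw [hyderiv]; exact (hu'.mul hAcont).add (hv'.mul hBcont)⟩
  -- part 3 : the equation
  have hyFTC : ∀ a b : ℝ, deriv (GreenOp u v f) b - deriv (GreenOp u v f) a
      = ∫ t in a..b, (q t * GreenOp u v f t - f t) := by
    intro a b
    have h1 := parts_ftc hu' hAcont hqu_loc hvf_loc huq hA a b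
    have h2 := parts_ftc (g := fun t => -(u t * f t)) hv' hBcont hqv_loc huf_loc.neg hvq hB a b
    have e1 : IntervalIntegrable
        (fun t => deriv u t * (v t * f t) + q t * u t * A t) volume a b :=
      locInt_ii (LocallyIntegrable.add (cont_mul_locInt hu' hvf_loc)
        (locInt_mul_cont hAcont hqu_loc)) a b
    have e2 : IntervalIntegrable
        (fun t => deriv v t * -(u t * f t) + q t * v t * B t) volume a b :=
      locInt_ii (LocallyIntegrable.add (cont_mul_locInt hv' huf_loc.neg)
        (locInt_mul_cont hBcont hqv_loc)) a b
    have h3 : (deriv u b * A b + deriv v b * B b) - (deriv u a * A a + deriv v a * B a)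
        = ∫ t in a..b, ((deriv u t * (v t * f t) + q t * u t * A t)
            + (deriv v t * -(u t * f t) + q t * v t * B t)) := by
      rw [intervalIntegral.integral_add e1 e2, ← h1, ← h2]
      ring
    rw [hyderiv]
    simp only
    rw [h3]
    refine intervalIntegral.integral_congr fun t _ => ?_
    rw [hsplit t]
    linear_combination (-(f t)) * hwr t
  -- part 4 : uniqueness
  have huniq : ∀ z : ℝ → ℝ, ContDiff ℝ 1 z → (∃ M : ℝ, ∀ x, |z x| ≤ M) →
      (∀ a b : ℝ, deriv z b - deriv z a = ∫ t in a..b, (q t * z t - f t)) →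
      z = GreenOp u v f := by
    intro z hz1 hzbnd hzFTC
    obtain ⟨Mz, hMz⟩ := hzbnd
    have hzdiff : Differentiable ℝ z := hz1.differentiable one_ne_zero
    have hzc : Continuous z := hzdiff.continuous
    have hz' : Continuous (deriv z) := (contDiff_one_iff_deriv.mp hz1).2
    set w : ℝ → ℝ := fun x => z x - GreenOp u v f x with hwdef
    have hwc : Continuous w := hzc.sub hycont
    have hwdiff : Differentiable ℝ w := hzdiff.sub hydiff
    have hw'eq : deriv w = fun x => deriv z x - deriv (GreenOp u v f) x :=
      funext fun x => deriv_sub (hzdiff x) (hydiff x)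
    have hw' : Continuous (deriv w) := by
      rw [hw'eq]
      exact hz'.sub (by rw [hyderiv]; exact (hu'.mul hAcont).add (hv'.mul hBcont))
    have hqw_loc : LocallyIntegrable (fun t => q t * w t) := locInt_mul_cont hwc hq_loc
    have hqz_loc : LocallyIntegrable (fun t => q t * z t) := locInt_mul_cont hzc hq_loc
    have hqy_loc : LocallyIntegrable (fun t => q t * GreenOp u v f t) :=
      locInt_mul_cont hycont hq_loc
    have hwFTC : ∀ a b : ℝ, deriv w b - deriv w a = ∫ t in a..b, q t * w t := by
      intro a b
      have hzint : IntervalIntegrable (fun t => q t * z t - f t) volume a b :=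
        locInt_ii (hqz_loc.sub hfloc) a b
      have hyint : IntervalIntegrable (fun t => q t * GreenOp u v f t - f t) volume a b :=
        locInt_ii (hqy_loc.sub hfloc) a b
      have e : deriv w b - deriv w a
          = (∫ t in a..b, (q t * z t - f t)) - ∫ t in a..b, (q t * GreenOp u v f t - f t) := by
        rw [hw'eq]
        simp only
        rw [← hzFTC a b, ← hyFTC a b]
        ring
      rw [e, ← intervalIntegral.integral_sub hzint hyint]
      refine intervalIntegral.integral_congr fun t _ => ?_
      rw [hwdef]
      simp only
      ring
    have hwFTC0 : ∀ a b : ℝ, w b - w a = ∫ t in a..b, deriv w t := fun a b =>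
      (intervalIntegral.integral_deriv_eq_sub (fun x _ => hwdiff x)
        (locInt_ii hw'.locallyIntegrable a b)).symm
    -- alpha and beta are constant
    have halpha : ∀ x : ℝ, deriv v x * w x - v x * deriv w x
        = deriv v 0 * w 0 - v 0 * deriv w 0 := by
      intro x
      have h1 := parts_ftc hv' hwc hqv_loc hw'.locallyIntegrable hvq hwFTC0 0 x
      have h2 := parts_ftc hv hw' hv'.locallyIntegrable hqw_loc hFTCv hwFTC 0 x
      have e1 : IntervalIntegrable
          (fun t => deriv v t * deriv w t + q t * v t * w t) volume 0 x :=
        locInt_ii (LocallyIntegrable.add ((hv'.mul hw').locallyIntegrable)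
          (locInt_mul_cont hwc hqv_loc)) 0 x
      have e2 : IntervalIntegrable
          (fun t => v t * (q t * w t) + deriv v t * deriv w t) volume 0 x :=
        locInt_ii (LocallyIntegrable.add (cont_mul_locInt hv hqw_loc)
          ((hv'.mul hw').locallyIntegrable)) 0 x
      have key : (deriv v x * w x - v x * deriv w x)
          - (deriv v 0 * w 0 - v 0 * deriv w 0)
          = ∫ t in (0:ℝ)..x, ((deriv v t * deriv w t + q t * v t * w t)
              - (v t * (q t * w t) + deriv v t * deriv w t)) := by
        rw [intervalIntegral.integral_sub e1 e2, ← h1, ← h2]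
        ring
      have hzero : (∫ t in (0:ℝ)..x, ((deriv v t * deriv w t + q t * v t * w t)
          - (v t * (q t * w t) + deriv v t * deriv w t))) = 0 := by
        rw [show (fun t => ((deriv v t * deriv w t + q t * v t * w t)
            - (v t * (q t * w t) + deriv v t * deriv w t))) = fun _ => (0:ℝ) from
          funext fun t => by ring]
        simp
      linarith [key, hzero]
    have hbeta : ∀ x : ℝ, deriv u x * w x - u x * deriv w x
        = deriv u 0 * w 0 - u 0 * deriv w 0 := by
      intro x
      have h1 := parts_ftc hu' hwc hqu_loc hw'.locallyIntegrable huq hwFTC0 0 x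
      have h2 := parts_ftc hu hw' hu'.locallyIntegrable hqw_loc hFTCu hwFTC 0 x
      have e1 : IntervalIntegrable
          (fun t => deriv u t * deriv w t + q t * u t * w t) volume 0 x :=
        locInt_ii (LocallyIntegrable.add ((hu'.mul hw').locallyIntegrable)
          (locInt_mul_cont hwc hqu_loc)) 0 x
      have e2 : IntervalIntegrable
          (fun t => u t * (q t * w t) + deriv u t * deriv w t) volume 0 x :=
        locInt_ii (LocallyIntegrable.add (cont_mul_locInt hu hqw_loc)
          ((hu'.mul hw').locallyIntegrable)) 0 x
      have key : (deriv u x * w x - u x * deriv w x)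
          - (deriv u 0 * w 0 - u 0 * deriv w 0)
          = ∫ t in (0:ℝ)..x, ((deriv u t * deriv w t + q t * u t * w t)
              - (u t * (q t * w t) + deriv u t * deriv w t)) := by
        rw [intervalIntegral.integral_sub e1 e2, ← h1, ← h2]
        ring
      have hzero : (∫ t in (0:ℝ)..x, ((deriv u t * deriv w t + q t * u t * w t)
          - (u t * (q t * w t) + deriv u t * deriv w t))) = 0 := by
        rw [show (fun t => ((deriv u t * deriv w t + q t * u t * w t)
            - (u t * (q t * w t) + deriv u t * deriv w t))) = fun _ => (0:ℝ) from
          funext fun t => by ring]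
        simp
      linarith [key, hzero]
    set c1 : ℝ := deriv v 0 * w 0 - v 0 * deriv w 0 with hc1def
    set c2 : ℝ := deriv u 0 * w 0 - u 0 * deriv w 0 with hc2def
    have hwrep : ∀ x, w x = c1 * u x - c2 * v x := by
      intro x
      have e1 : deriv v x * w x - v x * deriv w x = c1 := halpha x
      have e2 : deriv u x * w x - u x * deriv w x = c2 := hbeta x
      rw [← e1, ← e2]
      linear_combination (-(w x)) * hwr x
    have hwbnd : ∀ x, |w x| ≤ Mz + (2 * eLpNorm f p volume).toReal := by
      intro x
      rw [hwdef]
      simp only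
      calc |z x - GreenOp u v f x| ≤ |z x| + |GreenOp u v f x| := abs_sub _ _
        _ ≤ Mz + (2 * eLpNorm f p volume).toReal := add_le_add (hMz x) (hbound x)
    set M : ℝ := Mz + (2 * eLpNorm f p volume).toReal with hMdef
    -- c2 = 0
    have hc2 : c2 = 0 := by
      by_contra hc2ne
      have habs : 0 < |c2| := abs_pos.mpr hc2ne
      have hev1 : ∀ᶠ x in atTop, u x ≤ 1 := by
        filter_upwards [huT.eventually_lt_const (by norm_num : (0:ℝ) < 1)] with x hx
        exact hx.le
      have hev2 : ∀ᶠ x in atTop, (|c1| + M + 1) / |c2| ≤ v x :=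
        hvT.eventually_ge_atTop _
      obtain ⟨x, hx1, hx2⟩ := (hev1.and hev2).exists
      have h1 : |c2| * v x ≥ |c1| + M + 1 := by
        rw [ge_iff_le, ← div_le_iff₀' habs]
        exact hx2
      have h2 : |c2| * v x ≤ |c1| * u x + M := by
        have e : c2 * v x = c1 * u x - w x := by
          have := hwrep x
          linarith
        calc |c2| * v x = |c2 * v x| := by
              rw [abs_mul, abs_of_pos (hvpos x)]
          _ = |c1 * u x - w x| := by rw [e]
          _ ≤ |c1 * u x| + |w x| := abs_sub _ _
          _ ≤ |c1| * u x + M := by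
              rw [abs_mul, abs_of_pos (hupos x)]
              exact add_le_add le_rfl (hwbnd x)
      have h3 : |c1| * u x ≤ |c1| := by
        calc |c1| * u x ≤ |c1| * 1 := mul_le_mul_of_nonneg_left hx1 (abs_nonneg _)
          _ = |c1| := mul_one _
      linarith
    -- c1 = 0
    have hc1 : c1 = 0 := by
      by_contra hc1ne
      have habs : 0 < |c1| := abs_pos.mpr hc1ne
      have hev2 : ∀ᶠ x in atBot, (M + 1) / |c1| ≤ u x := huB.eventually_ge_atTop _
      obtain ⟨x, hx2⟩ := hev2.exists
      have h1 : |c1| * u x ≥ M + 1 := by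
        rw [ge_iff_le, ← div_le_iff₀' habs]
        exact hx2
      have h2 : |c1| * u x ≤ M := by
        have e : c1 * u x = w x := by
          have := hwrep x
          rw [hc2] at this
          linarith
        calc |c1| * u x = |c1 * u x| := by
              rw [abs_mul, abs_of_pos (hupos x)]
          _ = |w x| := by rw [e]
          _ ≤ M := hwbnd x
      linarith
    funext x
    have := hwrep x
    rw [hc1, hc2] at this
    have hw0 : w x = 0 := by rw [this]; ring
    rw [hwdef] at hw0
    simp only at hw0
    linarith
  exact ⟨hyC1, ⟨(2 * eLpNorm f p volume).toReal, hbound⟩, hyFTC, huniq⟩
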